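/- If R(z) ∈ ℝ[z,z⁻¹]^{m×n} has full row normal rank m, then the map induced by R(σ) on the quotient, R̄ : (ℝⁿ)^ℤ / ker∞R → (ℝᵐ)^ℤ, sending the coset of w to R(σ)w, is a well-defined ℝ-linear continuous bijection which is moreover a Borel isomorphism: both R̄ and its inverse are measurable with respect to the Borel σ-algebras of the quotient topology on (ℝⁿ)^ℤ / ker∞R and of the product topology on (ℝᵐ)^ℤ. -/

import Mathlib

/-- The shift operator `R(σ)` associated with a Laurent polynomial matrix
`R ∈ ℝ[z,z⁻¹]^{m×n}`, bundled as an ℝ-linear map: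
`(R(σ)w)(t)ᵢ = Σⱼ Σ_k coeff_k(Rᵢⱼ) · w(t+k)ⱼ`. -/
noncomputable def shiftOpL {p n : ℕ} (R : Matrix (Fin p) (Fin n) (LaurentPolynomial ℝ)) :
    (ℤ → Fin n → ℝ) →ₗ[ℝ] (ℤ → Fin p → ℝ) where
  toFun w := fun t i => ∑ j, Finsupp.sum (R i j).coeff fun k c => c * w (t + k) j
  map_add' w w' := by
    funext t i
    simp only [Pi.add_apply, mul_add]
    rw [← Finset.sum_add_distrib]
    exact Finset.sum_congr rfl fun j _ => Finsupp.sum_add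
  map_smul' a w := by
    funext t i
    simp only [Pi.smul_apply, smul_eq_mul, RingHom.id_apply]
    rw [Finset.mul_sum]
    refine Finset.sum_congr rfl fun j _ => ?_
    rw [Finsupp.mul_sum]
    exact Finsupp.sum_congr fun k _ => by ring

/-- The normal rank of a Laurent polynomial matrix: its rank as a matrix over the field of
fractions of `ℝ[z,z⁻¹]`. -/
noncomputable def normalRank {m : Type*} [Fintype m] {n : ℕ}
    (R : Matrix m (Fin n) (LaurentPolynomial ℝ)) : ℕ :=
  Matrix.rank (R.map (algebraMap (LaurentPolynomial ℝ) (FractionRing (LaurentPolynomial ℝ))))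

/-- If `R(z) ∈ ℝ[z,z⁻¹]^{m×n}` has full row normal rank `m`, then the map induced
by `R(σ)` on the quotient, `R̄ : (ℝⁿ)^ℤ / ker∞R → (ℝᵐ)^ℤ`, sending the coset of `w` to
`R(σ)w`, is a well-defined ℝ-linear continuous bijection which is moreover a Borel
isomorphism: both `R̄` and its inverse are measurable with respect to the Borel σ-algebras of
the quotient topology on `(ℝⁿ)^ℤ / ker∞R` and of the product topology on `(ℝᵐ)^ℤ`. -/
noncomputable def shiftE : LaurentPolynomial ℝ →ₐ[ℝ] Module.End ℝ (ℤ → ℝ) :=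
  AddMonoidAlgebra.lift ℝ _ ℤ
    { toFun := fun k => {
        toFun := fun u => fun t => u (t + Multiplicative.toAdd k)
        map_add' := fun u v => rfl
        map_smul' := fun c u => rfl }
      map_one' := by ext u t; simp
      map_mul' := fun k k' => by ext u t; simp [Module.End.mul_apply, add_assoc] }

lemma shiftE_apply (d : LaurentPolynomial ℝ) (u : ℤ → ℝ) (t : ℤ) :
    shiftE d u t = Finsupp.sum d.coeff fun k c => c * u (t + k) := by
  rw [shiftE, AddMonoidAlgebra.lift_apply]
  rw [Finsupp.sum, Finsupp.sum]
  rw [LinearMap.coe_sum, Finset.sum_apply, Finset.sum_apply]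
  rfl

lemma shiftOpL_apply {p n : ℕ} (R : Matrix (Fin p) (Fin n) (LaurentPolynomial ℝ))
    (w : ℤ → Fin n → ℝ) (t : ℤ) (i : Fin p) :
    shiftOpL R w t i = ∑ j, shiftE (R i j) (fun s => w s j) t := by
  simp only [shiftOpL, LinearMap.coe_mk, AddHom.coe_mk, shiftE_apply]

lemma shiftOpL_mul {p q r : ℕ} (A : Matrix (Fin p) (Fin q) (LaurentPolynomial ℝ))
    (B : Matrix (Fin q) (Fin r) (LaurentPolynomial ℝ)) (w : ℤ → Fin r → ℝ) :
    shiftOpL (A * B) w = shiftOpL A (shiftOpL B w) := by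
  funext t i
  rw [shiftOpL_apply, shiftOpL_apply]
  calc ∑ l, shiftE ((A * B) i l) (fun s => w s l) t
      = ∑ l, ∑ j, shiftE (A i j) (shiftE (B j l) (fun s => w s l)) t := by
        refine Finset.sum_congr rfl fun l _ => ?_
        rw [Matrix.mul_apply, map_sum, LinearMap.coe_sum, Finset.sum_apply,
          Finset.sum_apply]
        exact Finset.sum_congr rfl fun j _ => by rw [map_mul, Module.End.mul_apply]
    _ = ∑ j, ∑ l, shiftE (A i j) (shiftE (B j l) (fun s => w s l)) t := Finset.sum_comm
    _ = ∑ j, shiftE (A i j) (fun s => shiftOpL B w s j) t := by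
        refine Finset.sum_congr rfl fun j _ => ?_
        have : (fun s => shiftOpL B w s j) = ∑ l, shiftE (B j l) (fun s => w s l) := by
          funext s
          rw [shiftOpL_apply, Finset.sum_apply]
        rw [this, map_sum, Finset.sum_apply]


noncomputable def iterF (F : (ℕ → ℝ) → ℕ → ℝ) : ℕ → (ℕ → ℝ)
  | 0 => fun _ => 0
  | j + 1 => Function.update (iterF F j) j (F (iterF F j) j)

noncomputable def fixF (F : (ℕ → ℝ) → ℕ → ℝ) (j : ℕ) : ℝ := iterF F (j + 1) j

lemma iterF_lt (F : (ℕ → ℝ) → ℕ → ℝ) : ∀ j i, i < j → iterF F j i = fixF F i := by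
  intro j
  induction j with
  | zero => intro i h; omega
  | succ j ih =>
    intro i h
    rcases Nat.lt_or_ge i j with h' | h'
    · rw [iterF, Function.update_of_ne (by omega), ih i h']
    · have : i = j := by omega
      subst this
      rfl

lemma fixF_eq (F : (ℕ → ℝ) → ℕ → ℝ)
    (hF : ∀ p q j, (∀ i, i < j → p i = q i) → F p j = F q j) (j : ℕ) :
    fixF F j = F (fixF F) j := by
  show iterF F (j + 1) j = _
  rw [iterF, Function.update_self]
  exact hF _ _ j (fun i h => iterF_lt F j i h)

lemma exists_solution (c : ℤ → ℝ) (S : Finset ℤ) (L l : ℤ) (hL : L ∈ S)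
    (hcL : c L ≠ 0) (hl : l ∈ S) (hcl : c l ≠ 0)
    (hub : ∀ k ∈ S, k ≤ L) (hlb : ∀ k ∈ S, l ≤ k) (f : ℤ → ℝ) :
    ∃ u : ℤ → ℝ, ∀ t, ∑ k ∈ S, c k * u (t + k) = f t := by
  have hlL : l ≤ L := hlb L hL
  set FU : (ℕ → ℝ) → ℕ → ℝ := fun prev j =>
    if (j : ℤ) < L - l then 0 else
      (f ((j : ℤ) - (L - l)) - ∑ k ∈ S.erase L, c k * prev ((j : ℤ) + k - L).toNat) / c L
    with hFUdef
  have hFU : ∀ p q j, (∀ i, i < j → p i = q i) → FU p j = FU q j := by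
    intro p q j hpq
    simp only [hFUdef]
    split
    · rfl
    next h =>
      have : ∀ k ∈ S.erase L, c k * p ((j : ℤ) + k - L).toNat
          = c k * q ((j : ℤ) + k - L).toNat := by
        intro k hk
        have hk1 := hub k (Finset.mem_of_mem_erase hk)
        have hk2 : k ≠ L := Finset.ne_of_mem_erase hk
        have hk3 := hlb k (Finset.mem_of_mem_erase hk)
        rw [hpq _ (by omega)]
      rw [Finset.sum_congr rfl this]
  set U : ℕ → ℝ := fixF FU with hUdef
  have hUeq : ∀ j, U j = FU U j := fun j => fixF_eq FU hFU j
  set FW : (ℕ → ℝ) → ℕ → ℝ := fun prev j =>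
    (f (-1 - (j : ℤ)) - ∑ k ∈ S.erase l, c k *
      (if l ≤ -1 - (j : ℤ) + k then U ((-1 - (j : ℤ) + k - l).toNat)
       else prev ((l - 1 - (-1 - (j : ℤ) + k)).toNat))) / c l
    with hFWdef
  have hFW : ∀ p q j, (∀ i, i < j → p i = q i) → FW p j = FW q j := by
    intro p q j hpq
    simp only [hFWdef]
    have : ∀ k ∈ S.erase l,
        c k * (if l ≤ -1 - (j : ℤ) + k then U ((-1 - (j : ℤ) + k - l).toNat)
          else p ((l - 1 - (-1 - (j : ℤ) + k)).toNat))
        = c k * (if l ≤ -1 - (j : ℤ) + k then U ((-1 - (j : ℤ) + k - l).toNat)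
          else q ((l - 1 - (-1 - (j : ℤ) + k)).toNat)) := by
      intro k hk
      have hk1 := hub k (Finset.mem_of_mem_erase hk)
      have hk2 : k ≠ l := Finset.ne_of_mem_erase hk
      have hk3 := hlb k (Finset.mem_of_mem_erase hk)
      split
      · rfl
      next h => rw [hpq _ (by omega)]
    rw [Finset.sum_congr rfl this]
  set W : ℕ → ℝ := fixF FW with hWdef
  have hWeq : ∀ j, W j = FW W j := fun j => fixF_eq FW hFW j
  set u : ℤ → ℝ := fun s => if l ≤ s then U ((s - l).toNat) else W ((l - 1 - s).toNat)
    with hudef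
  refine ⟨u, fun t => ?_⟩
  rcases le_or_gt 0 t with ht | ht
  · -- forward case
    rw [← Finset.add_sum_erase S _ hL]
    have huL : u (t + L) = (f t - ∑ k ∈ S.erase L, c k * u (t + k)) / c L := by
      have h1 : u (t + L) = U ((t + L - l).toNat) := by
        rw [hudef]; simp only
        rw [if_pos (by omega)]
      rw [h1, hUeq, hFUdef]; simp only
      rw [if_neg (by omega)]
      have h2 : ((((t + L - l).toNat : ℤ)) - (L - l)) = t := by omega
      rw [h2]
      have h3 : ∀ k ∈ S.erase L, c k * U (((((t + L - l).toNat : ℕ) : ℤ)) + k - L).toNat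
          = c k * u (t + k) := by
        intro k hk
        have hk1 := hub k (Finset.mem_of_mem_erase hk)
        have hk2 : k ≠ L := Finset.ne_of_mem_erase hk
        have hk3 := hlb k (Finset.mem_of_mem_erase hk)
        have h4 : u (t + k) = U ((t + k - l).toNat) := by
          rw [hudef]; simp only
          rw [if_pos (by omega)]
        rw [h4]
        congr 2
        omega
      rw [Finset.sum_congr rfl h3]
    rw [huL, mul_div_cancel₀ _ hcL]
    ring
  · -- backward case
    rw [← Finset.add_sum_erase S _ hl]
    have huW : u (t + l) = (f t - ∑ k ∈ S.erase l, c k * u (t + k)) / c l := by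
      have h1 : u (t + l) = W ((-1 - t).toNat) := by
        rw [hudef]; simp only
        rw [if_neg (by omega)]
        congr 1
        omega
      rw [h1, hWeq, hFWdef]; simp only
      have h2 : (-1 - (((-1 - t).toNat : ℤ))) = t := by omega
      rw [h2]
    rw [huW, mul_div_cancel₀ _ hcl]
    ring

lemma shiftE_surjective (d : LaurentPolynomial ℝ) (hd : d ≠ 0) :
    Function.Surjective (shiftE d) := by
  intro f
  have hne : (Finsupp.support d.coeff).Nonempty := Finsupp.support_nonempty_iff.mpr (by simpa using hd)
  obtain ⟨u, hu⟩ := exists_solution (fun k => d.coeff k) (Finsupp.support d.coeff)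
    ((Finsupp.support d.coeff).max' hne) ((Finsupp.support d.coeff).min' hne)
    (Finset.max'_mem _ hne)
    (Finsupp.mem_support_iff.mp (Finset.max'_mem _ hne))
    (Finset.min'_mem _ hne)
    (Finsupp.mem_support_iff.mp (Finset.min'_mem _ hne))
    (fun k hk => Finset.le_max' _ _ hk) (fun k hk => Finset.min'_le _ _ hk) f
  refine ⟨u, ?_⟩
  funext t
  rw [shiftE_apply, Finsupp.sum]
  exact hu t


lemma exists_right_inverse {m n : ℕ} (R : Matrix (Fin m) (Fin n) (LaurentPolynomial ℝ))
    (hrk : normalRank R = m) :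
    ∃ (d : LaurentPolynomial ℝ) (H : Matrix (Fin n) (Fin m) (LaurentPolynomial ℝ)),
      d ≠ 0 ∧ R * H = d • (1 : Matrix (Fin m) (Fin m) (LaurentPolynomial ℝ)) := by
  letI : IsDomain (LaurentPolynomial ℝ) := NoZeroDivisors.to_isDomain _
  set K := FractionRing (LaurentPolynomial ℝ)
  set A := R.map (algebraMap (LaurentPolynomial ℝ) K) with hA
  have htop : LinearMap.range A.mulVecLin = ⊤ := by
    apply Submodule.eq_top_of_finrank_eq
    rw [← Matrix.rank]
    rw [show A.rank = m from hrk]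
    simp [Module.finrank_pi]
  have hsurj : Function.Surjective A.mulVecLin := LinearMap.range_eq_top.mp htop
  choose v hv using fun i : Fin m => hsurj (Pi.single i 1)
  set G : Matrix (Fin n) (Fin m) K := Matrix.of fun j i => v i j with hG
  have hAG : A * G = 1 := by
    refine Matrix.ext fun k i => ?_
    rw [Matrix.mul_apply, Matrix.one_apply]
    have h : A.mulVec (v i) = Pi.single i 1 := hv i
    rw [show (∑ j, A k j * G j i) = A.mulVec (v i) k from rfl, h]
    simp [Pi.single_apply, eq_comm]
  obtain ⟨b, hb⟩ := IsLocalization.exist_integer_multiples_of_finite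
    (nonZeroDivisors (LaurentPolynomial ℝ)) (fun p : Fin n × Fin m => G p.1 p.2)
  choose H hH using hb
  refine ⟨(b : LaurentPolynomial ℝ), Matrix.of fun j i => H (j, i),
    nonZeroDivisors.coe_ne_zero b, ?_⟩
  have hinj : Function.Injective (algebraMap (LaurentPolynomial ℝ) K) :=
    IsFractionRing.injective _ _
  refine Matrix.ext fun k i => ?_
  apply hinj
  have expand : algebraMap (LaurentPolynomial ℝ) K ((R * Matrix.of fun j i => H (j, i)) k i)
      = algebraMap (LaurentPolynomial ℝ) K (b : LaurentPolynomial ℝ) * (A * G) k i := by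
    rw [Matrix.mul_apply, map_sum, Matrix.mul_apply, Finset.mul_sum]
    refine Finset.sum_congr rfl fun j _ => ?_
    simp only [Matrix.of_apply]
    rw [map_mul, hH (j, i)]
    rw [Algebra.smul_def]
    simp only [hA, Matrix.map_apply]
    ring
  rw [expand, hAG]
  rw [Matrix.smul_apply, Matrix.one_apply, Matrix.one_apply, smul_eq_mul]
  split
  · simp
  · simp


lemma shiftOpL_surjective {m n : ℕ} (R : Matrix (Fin m) (Fin n) (LaurentPolynomial ℝ))
    (hrk : normalRank R = m) : Function.Surjective (shiftOpL R) := by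
  obtain ⟨d, H, hd, hRH⟩ := exists_right_inverse R hrk
  intro f
  choose v hv using fun i : Fin m => shiftE_surjective d hd (fun t => f t i)
  refine ⟨shiftOpL H (fun t i => v i t), ?_⟩
  rw [← shiftOpL_mul, hRH]
  funext t i
  rw [shiftOpL_apply]
  rw [Finset.sum_eq_single i]
  · have h1 : (d • (1 : Matrix (Fin m) (Fin m) (LaurentPolynomial ℝ))) i i = d := by
      simp [Matrix.smul_apply, Matrix.one_apply]
    rw [h1]
    exact congrFun (hv i) t
  · intro j _ hj
    have h0 : (d • (1 : Matrix (Fin m) (Fin m) (LaurentPolynomial ℝ))) i j = 0 := by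
      simp [Matrix.smul_apply, Matrix.one_apply, (Ne.symm hj)]
    rw [h0, map_zero]
    rfl
  · intro h
    exact absurd (Finset.mem_univ i) h

lemma shiftOpL_continuous {p n : ℕ} (R : Matrix (Fin p) (Fin n) (LaurentPolynomial ℝ)) :
    Continuous (shiftOpL R) := by
  apply continuous_pi
  intro t
  apply continuous_pi
  intro i
  show Continuous fun w : ℤ → Fin n → ℝ => ∑ j, Finsupp.sum (R i j).coeff fun k c => c * w (t + k) j
  apply continuous_finset_sum
  intro j _
  have : (fun w : ℤ → Fin n → ℝ => Finsupp.sum (R i j).coeff fun k c => c * w (t + k) j)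
      = fun w => ∑ k ∈ (R i j).coeff.support, (R i j).coeff k * w (t + k) j := rfl
  rw [this]
  apply continuous_finset_sum
  intro k _
  have hc : Continuous fun w : ℤ → Fin n → ℝ => w (t + k) j :=
    (continuous_apply j).comp (continuous_apply (t + k))
  exact continuous_const.mul hc

theorem induced_quotient_map_is_borel_isomorphism (m n : ℕ)
    (R : Matrix (Fin m) (Fin n) (LaurentPolynomial ℝ))
    (hrk : normalRank R = m) :
    ∃ Rbar : ((ℤ → Fin n → ℝ) ⧸ LinearMap.ker (shiftOpL R)) →ₗ[ℝ] (ℤ → Fin m → ℝ),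
      (∀ w : ℤ → Fin n → ℝ, Rbar (Submodule.Quotient.mk w) = shiftOpL R w) ∧
      Continuous Rbar ∧
      Function.Bijective Rbar ∧
      @Measurable _ _ (borel ((ℤ → Fin n → ℝ) ⧸ LinearMap.ker (shiftOpL R)))
        (borel (ℤ → Fin m → ℝ)) Rbar ∧
      ∃ g : (ℤ → Fin m → ℝ) → ((ℤ → Fin n → ℝ) ⧸ LinearMap.ker (shiftOpL R)),
        Function.LeftInverse g Rbar ∧ Function.RightInverse g Rbar ∧
        @Measurable _ _ (borel (ℤ → Fin m → ℝ))
          (borel ((ℤ → Fin n → ℝ) ⧸ LinearMap.ker (shiftOpL R))) g := by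
  classical
  set X := (ℤ → Fin n → ℝ) with hX
  set Y := (ℤ → Fin m → ℝ) with hY
  set Kr := LinearMap.ker (shiftOpL R) with hKr
  set Rb := Kr.liftQ (shiftOpL R) le_rfl with hRbdef
  have hmk : ∀ w : ℤ → Fin n → ℝ, Rb (Submodule.Quotient.mk w) = shiftOpL R w :=
    fun w => rfl
  have hqm : Topology.IsQuotientMap (Submodule.Quotient.mk : X → X ⧸ Kr) :=
    isQuotientMap_quot_mk
  have hcont : Continuous Rb := by
    rw [hqm.continuous_iff]
    exact shiftOpL_continuous R
  have hinj : Function.Injective Rb := by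
    rw [← LinearMap.ker_eq_bot]
    exact Submodule.ker_liftQ_eq_bot _ _ _ le_rfl
  have hsurj : Function.Surjective Rb := by
    intro y
    obtain ⟨w, hw⟩ := shiftOpL_surjective R hrk y
    exact ⟨Submodule.Quotient.mk w, hw⟩
  have hgl : Function.LeftInverse (Function.invFun Rb) Rb :=
    Function.leftInverse_invFun hinj
  have hgr : Function.RightInverse (Function.invFun Rb) Rb :=
    Function.rightInverse_invFun hsurj
  have hsat : ∀ x x' : X, shiftOpL R x = shiftOpL R x' →
      ((Submodule.Quotient.mk x : X ⧸ Kr) = Submodule.Quotient.mk x') := by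
    intro x x' h
    apply hinj
    rw [hmk, hmk, h]
  have hmeasg : @Measurable Y (X ⧸ Kr) (borel Y) (borel (X ⧸ Kr)) (Function.invFun Rb) := by
    intro B hB
    have hmkmeas : @Measurable X (X ⧸ Kr) (borel X) (borel (X ⧸ Kr))
        (Submodule.Quotient.mk : X → X ⧸ Kr) :=
      (continuous_quot_mk).borel_measurable
    set S : Set X := (Submodule.Quotient.mk : X → X ⧸ Kr) ⁻¹' B with hSdef
    have hSmeas0 : MeasurableSet S := by
      rw [BorelSpace.measurable_eq (α := X)]
      exact hmkmeas hB
    have him : Function.invFun Rb ⁻¹' B = shiftOpL R '' S := by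
      ext y
      constructor
      · intro hy
        obtain ⟨x, hx⟩ := Submodule.Quotient.mk_surjective Kr (Function.invFun Rb y)
        refine ⟨x, ?_, ?_⟩
        · show (Submodule.Quotient.mk x : X ⧸ Kr) ∈ B
          rw [hx]; exact hy
        · rw [← hmk x, hx]
          exact hgr y
      · rintro ⟨x, hxS, rfl⟩
        show Function.invFun Rb (shiftOpL R x) ∈ B
        rw [← hmk x, hgl (Submodule.Quotient.mk x)]
        exact hxS
    have hcomplim : (shiftOpL R '' S)ᶜ = shiftOpL R '' Sᶜ := by
      ext y
      simp only [Set.mem_compl_iff, Set.mem_image]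
      constructor
      · intro hy
        obtain ⟨x, hx⟩ := shiftOpL_surjective R hrk y
        refine ⟨x, fun hxS => hy ⟨x, hxS, hx⟩, hx⟩
      · rintro ⟨x, hxc, rfl⟩ ⟨x', hx'S, heq⟩
        exact hxc (by rwa [hSdef, Set.mem_preimage, hsat x' x heq] at hx'S)
    have hA1 : MeasureTheory.AnalyticSet (shiftOpL R '' S) :=
      hSmeas0.analyticSet.image_of_continuous (shiftOpL_continuous R)
    have hA2 : MeasureTheory.AnalyticSet (shiftOpL R '' Sᶜ) :=
      hSmeas0.compl.analyticSet.image_of_continuous (shiftOpL_continuous R)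
    have hms : MeasurableSet (shiftOpL R '' S) :=
      hA1.measurableSet_of_compl (by rw [hcomplim]; exact hA2)
    rw [him, ← BorelSpace.measurable_eq (α := Y)]
    exact hms
  exact ⟨Rb, hmk, hcont, ⟨hinj, hsurj⟩, hcont.borel_measurable,
    Function.invFun Rb, hgl, hgr, hmeasg⟩
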